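/- For every family 𝓑 of Borel subsets of 2^ℕ whose union is a free ultrafilter on ℕ, the least cardinality of a family of meager subsets of 2^ℕ covering 2^ℕ is at most the cardinality of 𝓑 (i.e. cov(meager) ≤ 𝔲_B). -/

import Mathlib

open Cardinal

/-- Identify `x : ℕ → Bool` with the subset `{n | x n = true}` of `ℕ`. -/
def toSet (x : ℕ → Bool) : Set ℕ := {n | x n = true}

/-- A free ultrafilter is one containing all cofinite sets. -/
def IsFree (U : Ultrafilter ℕ) : Prop := ∀ s : Set ℕ, s.Finite → sᶜ ∈ U

/-- `cov(meager)`: the least cardinality of a family of meager subsets of `2^ℕ`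
covering `2^ℕ`. -/
noncomputable def covMeager : Cardinal :=
  sInf {c : Cardinal | ∃ 𝓜 : Set (Set (ℕ → Bool)),
    (∀ A ∈ 𝓜, IsMeagre A) ∧ ⋃₀ 𝓜 = Set.univ ∧ c = #𝓜}

/-- The homeomorphism of `2^ℕ` flipping the coordinates where `e` is `true`. -/
def flipE (e : ℕ → Bool) : (ℕ → Bool) ≃ₜ (ℕ → Bool) where
  toFun x := fun n => xor (x n) (e n)
  invFun x := fun n => xor (x n) (e n)
  left_inv x := funext fun n => by
    show xor (xor (x n) (e n)) (e n) = x n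
    cases x n <;> cases e n <;> rfl
  right_inv x := funext fun n => by
    show xor (xor (x n) (e n)) (e n) = x n
    cases x n <;> cases e n <;> rfl
  continuous_toFun := continuous_pi fun n =>
    (continuous_of_discreteTopology (f := fun b => xor b (e n))).comp (continuous_apply n)
  continuous_invFun := continuous_pi fun n =>
    (continuous_of_discreteTopology (f := fun b => xor b (e n))).comp (continuous_apply n)

lemma toSet_flipE (e x : ℕ → Bool) : toSet (flipE e x) = symmDiff (toSet x) (toSet e) := by
  ext n
  simp only [toSet, flipE, Homeomorph.homeomorph_mk_coe, Equiv.coe_fn_mk, Set.mem_setOf_eq,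
    Set.mem_symmDiff]
  cases hx : x n <;> cases he : e n <;> simp

lemma mem_U_symmDiff_of_mem (U : Ultrafilter ℕ) (hfree : IsFree U) {s t : Set ℕ}
    (ht : t.Finite) (hs : s ∈ U) : symmDiff s t ∈ U := by
  refine Filter.mem_of_superset (Filter.inter_mem hs (hfree t ht)) ?_
  intro n hn
  exact Set.mem_symmDiff.mpr (Or.inl ⟨hn.1, hn.2⟩)

lemma mem_U_symmDiff (U : Ultrafilter ℕ) (hfree : IsFree U) {s t : Set ℕ}
    (ht : t.Finite) : symmDiff s t ∈ U ↔ s ∈ U := by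
  constructor
  · intro h
    have := mem_U_symmDiff_of_mem U hfree ht h
    rwa [symmDiff_symmDiff_cancel_right] at this
  · exact mem_U_symmDiff_of_mem U hfree ht

/-- The ultrafilter `U` as a subset of Cantor space. -/
def Fset (U : Ultrafilter ℕ) : Set (ℕ → Bool) := {x | toSet x ∈ U}

lemma flipE_mem_Fset (U : Ultrafilter ℕ) (hfree : IsFree U) {e : ℕ → Bool}
    (he : (toSet e).Finite) (x : ℕ → Bool) : flipE e x ∈ Fset U ↔ x ∈ Fset U := by
  simp only [Fset, Set.mem_setOf_eq, toSet_flipE]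
  exact mem_U_symmDiff U hfree he

/-- Flipping all coordinates exchanges `Fset U` with its complement. -/
lemma flipE_true_mem_Fset (U : Ultrafilter ℕ) (x : ℕ → Bool) :
    flipE (fun _ => true) x ∈ Fset U ↔ x ∉ Fset U := by
  simp only [Fset, Set.mem_setOf_eq, toSet_flipE]
  have : toSet (fun _ : ℕ => true) = Set.univ := by ext n; simp [toSet]
  rw [this, ← Set.top_eq_univ, symmDiff_top]
  exact Ultrafilter.compl_mem_iff_notMem

lemma not_isMeagre_univ : ¬ IsMeagre (Set.univ : Set (ℕ → Bool)) := by
  intro h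
  rw [IsMeagre, Set.compl_univ] at h
  simpa using (dense_of_mem_residual h).nonempty

lemma isMeagre_biUnion' {ι : Type*} {E : Set ι} (hE : E.Countable)
    {s : ι → Set (ℕ → Bool)} (h : ∀ e ∈ E, IsMeagre (s e)) :
    IsMeagre (⋃ e ∈ E, s e) := by
  rw [IsMeagre, Set.compl_iUnion₂]
  exact (countable_bInter_mem hE).mpr h

/-- Key lemma: any Baire-measurable subset of a free ultrafilter is meager. -/
lemma isMeagre_of_subset_Fset (U : Ultrafilter ℕ) (hfree : IsFree U)
    {B : Set (ℕ → Bool)} (hB : BaireMeasurableSet B) (hBF : B ⊆ Fset U) :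
    IsMeagre B := by
  classical
  by_contra hnm
  obtain ⟨V, hV, hBV⟩ := hB.residualEq_isOpen
  rw [Filter.eventuallyEq_set] at hBV
  -- B \ V and V \ B are meager
  have hBV1 : IsMeagre (B \ V) := by
    refine Filter.mem_of_superset hBV ?_
    intro y hy hy'
    exact hy'.2 (hy.mp hy'.1)
  have hVB : IsMeagre (V \ B) := by
    refine Filter.mem_of_superset hBV ?_
    intro y hy hy'
    exact hy'.2 (hy.mpr hy'.1)
  -- V is nonempty
  have hVne : V.Nonempty := by
    rcases Set.eq_empty_or_nonempty V with h | h
    · exact absurd (hBV1.mono (by simp [h])) hnm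
    · exact h
  obtain ⟨x, hxV⟩ := hVne
  -- find a cylinder around x inside V
  have hxN : V ∈ nhds x := hV.mem_nhds hxV
  rw [nhds_pi, Filter.mem_pi] at hxN
  obtain ⟨I, hI, t, ht, htV⟩ := hxN
  set C : Set (ℕ → Bool) := {y | ∀ i ∈ I, y i = x i} with hC
  have hCV : C ⊆ V := by
    intro y hy
    apply htV
    intro i hi
    rw [hy i hi]
    exact mem_of_mem_nhds (ht i)
  -- C \ Fset U is meager
  have hCF : IsMeagre (C \ Fset U) := by
    refine hVB.mono ?_
    intro y hy
    exact ⟨hCV hy.1, fun h => hy.2 (hBF h)⟩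
  -- the finite set of flips supported in I
  set E : Set (ℕ → Bool) := {e | ∀ n, n ∉ I → e n = false} with hE
  have hEfin : E.Finite := by
    haveI := hI.fintype
    have : E ⊆ (fun f : I → Bool => fun n : ℕ =>
        if h : n ∈ I then f ⟨n, h⟩ else false) '' Set.univ := by
      intro e he
      refine ⟨fun i => e i, Set.mem_univ _, ?_⟩
      funext n
      by_cases h : n ∈ I
      · simp [h]
      · simp [h, he n h]
    exact (Set.finite_univ.image _).subset this
  -- the complement of Fset U is covered by flips of C \ Fset U
  have hcover : (Fset U)ᶜ ⊆ ⋃ e ∈ E, (flipE e) ⁻¹' (C \ Fset U) := by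
    intro y hy
    set e : ℕ → Bool := fun n => if n ∈ I then xor (y n) (x n) else false with he
    have heE : e ∈ E := fun n hn => by simp [he, hn]
    have hefin : (toSet e).Finite := by
      refine hI.subset ?_
      intro n hn
      by_contra h
      simp [toSet, he, h] at hn
    refine Set.mem_biUnion heE ?_
    refine ⟨?_, ?_⟩
    · intro i hi
      show xor (y i) (e i) = x i
      have : e i = xor (y i) (x i) := by rw [he]; exact if_pos hi
      rw [this]
      cases y i <;> cases x i <;> rfl
    · intro h
      exact hy ((flipE_mem_Fset U hfree hefin y).mp h)
  have hFc : IsMeagre (Fset U)ᶜ := by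
    refine (isMeagre_biUnion' hEfin.countable ?_).mono hcover
    intro e _
    exact hCF.preimage_of_isOpenMap (flipE e).continuous (flipE e).isOpenMap
  -- hence Fset U itself is meager, via the global flip
  have hF : IsMeagre (Fset U) := by
    have : (flipE (fun _ => true)) ⁻¹' (Fset U)ᶜ = Fset U := by
      ext y
      simp only [Set.mem_preimage, Set.mem_compl_iff]
      rw [← not_iff_not, flipE_true_mem_Fset U y]
      tauto
    rw [← this]
    exact hFc.preimage_of_isOpenMap (flipE _).continuous (flipE _).isOpenMap
  apply not_isMeagre_univ
  have : (Set.univ : Set (ℕ → Bool)) = Fset U ∪ (Fset U)ᶜ := by simp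
  rw [this, IsMeagre, Set.compl_union]
  exact Filter.inter_mem hF hFc

/-- If the union of a family `𝓑` of Borel subsets of `2^ℕ` is a free ultrafilter,
then `cov(meager) ≤ |𝓑|`. -/
theorem covMeager_le_uB (𝓑 : Set (Set (ℕ → Bool))) (hBorel : ∀ B ∈ 𝓑, MeasurableSet B)
    (U : Ultrafilter ℕ) (hfree : IsFree U)
    (hunion : toSet '' ⋃₀ 𝓑 = {s : Set ℕ | s ∈ U}) :
    covMeager ≤ #𝓑 := by
  have htoSet_inj : Function.Injective toSet := by
    intro x y h
    funext n
    have : x n = true ↔ y n = true := by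
      constructor <;> intro h' <;>
        [exact (h ▸ (Set.mem_setOf_eq ▸ h') : n ∈ toSet y);
         exact (h.symm ▸ (Set.mem_setOf_eq ▸ h') : n ∈ toSet x)]
    cases hx : x n <;> cases hy : y n <;> simp_all
  have hFU : ⋃₀ 𝓑 = Fset U := by
    have := congrArg (toSet ⁻¹' ·) hunion
    simpa [Fset, Set.preimage_image_eq _ htoSet_inj] using this
  -- every member of 𝓑 is meager
  have hmeagre : ∀ B ∈ 𝓑, IsMeagre B := by
    intro B hB
    refine isMeagre_of_subset_Fset U hfree (hBorel B hB).baireMeasurableSet ?_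
    rw [← hFU]
    exact Set.subset_sUnion_of_mem hB
  -- 𝓑 is infinite
  have hinf : 𝓑.Infinite := by
    intro hfin
    have hFm : IsMeagre (Fset U) := by
      refine isMeagre_of_subset_Fset U hfree ?_ (le_refl _)
      rw [← hFU]
      exact (hfin.measurableSet_sUnion hBorel).baireMeasurableSet
    have hFcm : IsMeagre (Fset U)ᶜ := by
      have : (flipE (fun _ => true)) ⁻¹' (Fset U) = (Fset U)ᶜ := by
        ext y
        simp only [Set.mem_preimage, Set.mem_compl_iff]
        exact flipE_true_mem_Fset U y
      rw [← this]
      exact hFm.preimage_of_isOpenMap (flipE _).continuous (flipE _).isOpenMap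
    apply not_isMeagre_univ
    have : (Set.univ : Set (ℕ → Bool)) = Fset U ∪ (Fset U)ᶜ := by simp
    rw [this, IsMeagre, Set.compl_union]
    exact Filter.inter_mem hFm hFcm
  -- the covering family
  set c := flipE (fun _ : ℕ => true) with hc
  set 𝓜 : Set (Set (ℕ → Bool)) := 𝓑 ∪ ((fun B => c ⁻¹' B) '' 𝓑) with h𝓜
  have h1 : ∀ A ∈ 𝓜, IsMeagre A := by
    rintro A (hA | ⟨B, hB, rfl⟩)
    · exact hmeagre A hA
    · exact (hmeagre B hB).preimage_of_isOpenMap c.continuous c.isOpenMap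
  have h2 : ⋃₀ 𝓜 = Set.univ := by
    refine Set.eq_univ_of_forall fun y => ?_
    by_cases hy : y ∈ Fset U
    · rw [← hFU] at hy
      obtain ⟨B, hB, hyB⟩ := hy
      exact ⟨B, Or.inl hB, hyB⟩
    · have : c y ∈ Fset U := (flipE_true_mem_Fset U y).mpr hy
      rw [← hFU] at this
      obtain ⟨B, hB, hyB⟩ := this
      exact ⟨c ⁻¹' B, Or.inr ⟨B, hB, rfl⟩, hyB⟩
  have h3 : #𝓜 ≤ #𝓑 := by
    haveI : Infinite ↥𝓑 := Set.infinite_coe_iff.mpr hinf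
    calc #𝓜 ≤ #𝓑 + #((fun B => c ⁻¹' B) '' 𝓑) := Cardinal.mk_union_le _ _
    _ ≤ #𝓑 + #𝓑 := by
        gcongr
        exact Cardinal.mk_image_le
    _ = #𝓑 := Cardinal.add_eq_self (Cardinal.aleph0_le_mk _)
  calc covMeager ≤ #𝓜 := csInf_le' ⟨𝓜, h1, h2, rfl⟩
  _ ≤ #𝓑 := h3
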